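/- For all nonnegative integers k₀, k₁, k₂ with k₀+k₁+k₂ = k: x_{α₁}(−2)^{k₀+k₂+1} · x_{α₁}(−1)^{k₁} · x_{α₁+α₂}(−1)^{k₂} ∈ I_{k₂Λ₀+k₀Λ₁+k₁Λ₂}. -/

import Mathlib

/- Setup: the nilpotent subalgebra 𝔫 ⊂ 𝔰𝔩(3,ℂ) spanned by E₁₂, E₂₃, E₁₃, its loop
algebra 𝔫̄ = 𝔫 ⊗ ℂ[t,t⁻¹], and the universal enveloping algebra U(𝔫̄). -/

noncomputable section
open scoped TensorProduct

namespace PrincipalSubspaceSL3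

attribute [local instance 100] LieRing.ofAssociativeRing

/-- 3×3 complex matrices. -/
abbrev gl3 : Type := Matrix (Fin 3) (Fin 3) ℂ

/-- The root vectors: `Egen 0 = x_{α₁} = E₁₂`, `Egen 1 = x_{α₂} = E₂₃`,
`Egen 2 = x_{α₁+α₂} = E₁₃`. -/
def Egen : Fin 3 → gl3
  | 0 => Matrix.single 0 1 1
  | 1 => Matrix.single 1 2 1
  | 2 => Matrix.single 0 2 1

lemma egen_lie_mem :
    ∀ x ∈ Submodule.span ℂ (Set.range Egen), ∀ y ∈ Submodule.span ℂ (Set.range Egen),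
      ⁅x, y⁆ ∈ Submodule.span ℂ (Set.range Egen) := by
  have key : ∀ a b : Fin 3, ⁅Egen a, Egen b⁆ ∈ Submodule.span ℂ (Set.range Egen) := by
    intro a b
    fin_cases a <;> fin_cases b <;>
      simp only [Egen, Ring.lie_def, Matrix.single_mul_single_same,
        Matrix.single_mul_single_of_ne, Fin.reduceEq, ne_eq, not_false_eq_true,
        one_mul, sub_zero, zero_sub, sub_self] <;>
      first
        | exact Submodule.zero_mem _
        | exact Submodule.subset_span ⟨2, rfl⟩
        | exact Submodule.neg_mem _ (Submodule.subset_span ⟨2, rfl⟩)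
  intro x hx
  induction hx using Submodule.span_induction with
  | mem x hxs =>
      obtain ⟨a, rfl⟩ := hxs
      intro y hy
      induction hy using Submodule.span_induction with
      | mem y hys => obtain ⟨b, rfl⟩ := hys; exact key a b
      | zero => simp
      | add y z hy hz hy' hz' => rw [lie_add]; exact Submodule.add_mem _ hy' hz'
      | smul c y hy hy' => rw [lie_smul]; exact Submodule.smul_mem _ _ hy'
  | zero => intro y hy; simp
  | add x z hx hz hx' hz' =>
      intro y hy; rw [add_lie]; exact Submodule.add_mem _ (hx' y hy) (hz' y hy)
  | smul c x hx hx' =>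
      intro y hy; rw [smul_lie]; exact Submodule.smul_mem _ _ (hx' y hy)

/-- The nilpotent Lie subalgebra 𝔫 = ℂE₁₂ ⊕ ℂE₂₃ ⊕ ℂE₁₃ of 𝔰𝔩(3,ℂ). -/
def nn : LieSubalgebra ℂ gl3 :=
  { Submodule.span ℂ (Set.range Egen) with
    lie_mem' := fun {x y} hx hy => egen_lie_mem x hx y hy }

/-- Laurent polynomials ℂ[t, t⁻¹]. -/
abbrev A : Type := LaurentPolynomial ℂ

/-- The loop algebra 𝔫̄ = 𝔫 ⊗ ℂ[t,t⁻¹]. -/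
abbrev nbar : Type := A ⊗[ℂ] nn

set_option synthInstance.maxHeartbeats 1000000 in
instance : LieAlgebra ℂ nbar where
  lie_smul c x y := by
    have h := lie_smul (algebraMap ℂ A c) x y
    rwa [algebraMap_smul, algebraMap_smul] at h

/-- The root vectors as elements of 𝔫. -/
def en (i : Fin 3) : nn := ⟨Egen i, Submodule.subset_span ⟨i, rfl⟩⟩

/-- `nx i m` is the element x_{α}(m) = x_α ⊗ tᵐ of 𝔫̄, where α is α₁, α₂, α₁+α₂
according to i = 0, 1, 2. -/
def nx (i : Fin 3) (m : ℤ) : nbar := LaurentPolynomial.T m ⊗ₜ[ℂ] en i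

/-- The universal enveloping algebra U(𝔫̄). -/
abbrev U : Type := UniversalEnvelopingAlgebra ℂ nbar

/-- `xg i m` is the element x_α(m) regarded inside U(𝔫̄). -/
def xg (i : Fin 3) (m : ℤ) : U := UniversalEnvelopingAlgebra.ι ℂ (nx i m)

/-- `Rtr k i t` = R^i_{-1,t} : the sum of x_{α_i}(m₁)⋯x_{α_i}(m_{k+1}) over all integer
tuples with every m_j ≤ -1 and m₁+⋯+m_{k+1} = -t (parametrized by m_j = -1 - n_j with
n : Fin (k+1) → ℕ, ∑ n = t - (k+1)).  Here i : Fin 2 refers to the simple root α_{i+1}. -/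
def Rtr (k : ℕ) (i : Fin 2) (t : ℤ) : U :=
  ∑ f ∈ Finset.Nat.antidiagonalTuple (k + 1) (t - (k + 1)).toNat,
    (List.ofFn fun j : Fin (k + 1) => xg i.castSucc (-1 - (f j : ℤ))).prod

/-- The left ideal J = Σ_{i,t≥k+1} U(𝔫̄)·R^i_{-1,t}. -/
def Jid (k : ℕ) : Submodule U U :=
  Submodule.span U {u : U | ∃ i : Fin 2, ∃ t : ℤ, (k : ℤ) + 1 ≤ t ∧ u = Rtr k i t}

/-- The left ideal U(𝔫̄)·𝔫̄₊, generated by the x_α(m) with m ≥ 0. -/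
def nplusIdeal : Submodule U U :=
  Submodule.span U {u : U | ∃ i : Fin 3, ∃ m : ℤ, 0 ≤ m ∧ u = xg i m}

/-- The left ideal I_{kΛ₀} = J + U(𝔫̄)·𝔫̄₊. -/
def IkL0 (k : ℕ) : Submodule U U := Jid k ⊔ nplusIdeal

/-- The left ideal I_{k₀Λ₀+k₁Λ₁+k₂Λ₂} = I_{kΛ₀} + U·x_{α₁}(-1)^{k₀+k₂+1}
+ U·x_{α₂}(-1)^{k₀+k₁+1} + U·x_{α₁+α₂}(-1)^{k₀+1} (with k = k₀+k₁+k₂). -/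
def Iwt (k k0 k1 k2 : ℕ) : Submodule U U :=
  IkL0 k ⊔ Submodule.span U {xg 0 (-1) ^ (k0 + k2 + 1)}
    ⊔ Submodule.span U {xg 1 (-1) ^ (k0 + k1 + 1)}
    ⊔ Submodule.span U {xg 2 (-1) ^ (k0 + 1)}


/-! ### Auxiliary lemmas -/

open LaurentPolynomial in
lemma nx_lie (i j : Fin 3) (m p : ℤ) :
    ⁅nx i m, nx j p⁆ = (T (m + p) : A) ⊗ₜ[ℂ] ⁅en i, en j⁆ := by
  rw [nx, nx, LieAlgebra.ExtendScalars.bracket_tmul, ← T_add]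

lemma xg_lie (i j : Fin 3) (m p : ℤ) :
    xg i m * xg j p - xg j p * xg i m
      = UniversalEnvelopingAlgebra.ι ℂ ((LaurentPolynomial.T (m + p) : A) ⊗ₜ[ℂ] ⁅en i, en j⁆) := by
  rw [← nx_lie]
  rw [show UniversalEnvelopingAlgebra.ι ℂ ⁅nx i m, nx j p⁆
      = ⁅UniversalEnvelopingAlgebra.ι ℂ (nx i m), UniversalEnvelopingAlgebra.ι ℂ (nx j p)⁆ from
    (UniversalEnvelopingAlgebra.ι ℂ).map_lie _ _]
  rw [Ring.lie_def]
  rfl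

lemma en_lie_00 : ⁅en 0, en 0⁆ = (0 : nn) := lie_self _

lemma en_lie_22 : ⁅en 2, en 2⁆ = (0 : nn) := lie_self _

lemma en_lie_02 : ⁅en 0, en 2⁆ = (0 : nn) := by
  apply Subtype.ext
  show ⁅Egen 0, Egen 2⁆ = (0 : gl3)
  simp only [Egen, Ring.lie_def, Matrix.single_mul_single_of_ne, Fin.reduceEq, ne_eq,
    not_false_eq_true, sub_zero, sub_self]

lemma en_lie_20 : ⁅en 2, en 0⁆ = (0 : nn) := by
  apply Subtype.ext
  show ⁅Egen 2, Egen 0⁆ = (0 : gl3)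
  simp only [Egen, Ring.lie_def, Matrix.single_mul_single_of_ne, Fin.reduceEq, ne_eq,
    not_false_eq_true, sub_zero, sub_self]

lemma en_lie_12 : ⁅en 1, en 2⁆ = (0 : nn) := by
  apply Subtype.ext
  show ⁅Egen 1, Egen 2⁆ = (0 : gl3)
  simp only [Egen, Ring.lie_def, Matrix.single_mul_single_of_ne, Fin.reduceEq, ne_eq,
    not_false_eq_true, sub_zero, sub_self]

lemma en_lie_10 : ⁅en 1, en 0⁆ = -(en 2) := by
  apply Subtype.ext
  show ⁅Egen 1, Egen 0⁆ = -(Egen 2)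
  simp only [Egen, Ring.lie_def, Matrix.single_mul_single_same,
    Matrix.single_mul_single_of_ne, Fin.reduceEq, ne_eq, not_false_eq_true,
    one_mul, zero_sub]

lemma xg_commute {i j : Fin 3} (m p : ℤ) (h : ⁅en i, en j⁆ = 0) :
    Commute (xg i m) (xg j p) := by
  have h2 := xg_lie i j m p
  rw [h, TensorProduct.tmul_zero, map_zero] at h2
  rw [commute_iff_eq]
  exact sub_eq_zero.mp h2

lemma comm00 (m p : ℤ) : Commute (xg 0 m) (xg 0 p) := xg_commute m p en_lie_00
lemma comm02 (m p : ℤ) : Commute (xg 0 m) (xg 2 p) := xg_commute m p en_lie_02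
lemma comm20 (m p : ℤ) : Commute (xg 2 m) (xg 0 p) := xg_commute m p en_lie_20
lemma comm22 (m p : ℤ) : Commute (xg 2 m) (xg 2 p) := xg_commute m p en_lie_22
lemma comm12 (m p : ℤ) : Commute (xg 1 m) (xg 2 p) := xg_commute m p en_lie_12

lemma yx_rel : xg 1 0 * xg 0 (-1) = xg 0 (-1) * xg 1 0 - xg 2 (-1) := by
  have h := xg_lie 1 0 0 (-1)
  rw [en_lie_10, TensorProduct.tmul_neg, map_neg] at h
  have hz : UniversalEnvelopingAlgebra.ι ℂ ((LaurentPolynomial.T (0 + -1) : A) ⊗ₜ[ℂ] en 2)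
      = xg 2 (-1) := by norm_num; rfl
  rw [hz] at h
  have h2 := sub_eq_iff_eq_add.mp h
  rw [neg_add_eq_sub] at h2
  exact h2

/-- `y·x^(n+1) = x^(n+1)·y − (n+1)·(x^n·z)` where `y = x_{α₂}(0)`, `x = x_{α₁}(−1)`,
`z = x_{α₁+α₂}(−1)`. -/
lemma y_mul_xpow : ∀ n : ℕ, xg 1 0 * xg 0 (-1) ^ (n + 1)
    = xg 0 (-1) ^ (n + 1) * xg 1 0 - (((n : ℂ) + 1)) • (xg 0 (-1) ^ n * xg 2 (-1)) := by
  intro n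
  induction n with
  | zero =>
      rw [zero_add, pow_one, pow_zero, one_mul, Nat.cast_zero, zero_add, one_smul]
      exact yx_rel
  | succ m ih =>
      have hzx : xg 2 (-1) * xg 0 (-1) ^ (m + 1) = xg 0 (-1) ^ (m + 1) * xg 2 (-1) :=
        ((comm20 (-1) (-1)).pow_right (m + 1)).eq
      calc xg 1 0 * xg 0 (-1) ^ (m + 1 + 1)
          = (xg 1 0 * xg 0 (-1)) * xg 0 (-1) ^ (m + 1) := by
            rw [pow_succ' (xg 0 (-1)) (m + 1), ← mul_assoc]
        _ = xg 0 (-1) * (xg 1 0 * xg 0 (-1) ^ (m + 1))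
              - xg 2 (-1) * xg 0 (-1) ^ (m + 1) := by
            rw [yx_rel, sub_mul, mul_assoc]
        _ = xg 0 (-1) * (xg 0 (-1) ^ (m + 1) * xg 1 0
              - (((m : ℂ) + 1)) • (xg 0 (-1) ^ m * xg 2 (-1)))
              - xg 0 (-1) ^ (m + 1) * xg 2 (-1) := by rw [ih, hzx]
        _ = xg 0 (-1) ^ (m + 1 + 1) * xg 1 0
              - (((m : ℂ) + 1)) • (xg 0 (-1) ^ (m + 1) * xg 2 (-1))
              - xg 0 (-1) ^ (m + 1) * xg 2 (-1) := by
            rw [mul_sub, mul_smul_comm, ← mul_assoc, ← mul_assoc,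
              ← pow_succ' (xg 0 (-1)) (m + 1), ← pow_succ' (xg 0 (-1)) m]
        _ = xg 0 (-1) ^ (m + 1 + 1) * xg 1 0
              - ((((m : ℕ) + 1 : ℕ) : ℂ) + 1) • (xg 0 (-1) ^ (m + 1) * xg 2 (-1)) := by
            rw [sub_sub]
            congr 1
            push_cast
            module

set_option maxHeartbeats 2000000 in
set_option synthInstance.maxHeartbeats 400000 in
/-- Moving `y^b` past `x^(n+b)` modulo right multiples of `y`. -/
lemma ypow_xpow (n : ℕ) : ∀ b : ℕ, ∃ u : U, xg 1 0 ^ b * xg 0 (-1) ^ (n + b)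
    = (((-1 : ℂ) ^ b * (((n + b).descFactorial b : ℕ) : ℂ))) • (xg 0 (-1) ^ n * xg 2 (-1) ^ b)
      + u * xg 1 0 := by
  intro b
  induction b with
  | zero =>
      refine ⟨0, ?_⟩
      simp
  | succ b ih =>
      obtain ⟨u, hu⟩ := ih
      have hyz : xg 1 0 * xg 2 (-1) = xg 2 (-1) * xg 1 0 := (comm12 0 (-1)).eq
      refine ⟨xg 1 0 ^ b * xg 0 (-1) ^ (n + b + 1)
        - (((n + b : ℕ) : ℂ) + 1) • (u * xg 2 (-1)), ?_⟩
      set x := xg 0 (-1) with hx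
      set y := xg 1 0 with hy
      set z := xg 2 (-1) with hzdef
      set cb : ℂ := (-1 : ℂ) ^ b * (((n + b).descFactorial b : ℕ) : ℂ) with hcb
      set c1 : ℂ := ((n + b : ℕ) : ℂ) + 1 with hc1
      have hdesc : (((n + (b + 1)).descFactorial (b + 1) : ℕ) : ℂ)
          = ((n + b + 1 : ℕ) : ℂ) * (((n + b).descFactorial b : ℕ) : ℂ) := by
        rw [show n + (b + 1) = (n + b) + 1 by omega, Nat.succ_descFactorial_succ]
        push_cast
        ring
      have hcoef : ((-1 : ℂ) ^ (b + 1) * (((n + (b + 1)).descFactorial (b + 1) : ℕ) : ℂ))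
          = -(c1 * cb) := by
        rw [hdesc, hcb, hc1]
        push_cast
        ring
      calc y ^ (b + 1) * x ^ (n + (b + 1))
          = y ^ b * (y * x ^ (n + b + 1)) := by
            rw [pow_succ, mul_assoc, show n + (b + 1) = n + b + 1 by omega]
        _ = y ^ b * (x ^ (n + b + 1) * y - c1 • (x ^ (n + b) * z)) := by
            rw [y_mul_xpow (n + b)]
        _ = (y ^ b * x ^ (n + b + 1)) * y - c1 • ((y ^ b * x ^ (n + b)) * z) := by
            rw [mul_sub, mul_smul_comm, ← mul_assoc, ← mul_assoc]
        _ = (y ^ b * x ^ (n + b + 1)) * y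
              - c1 • (cb • (x ^ n * z ^ (b + 1)) + (u * z) * y) := by
            rw [hu, add_mul, smul_mul_assoc, mul_assoc (x ^ n), ← pow_succ,
              mul_assoc u y z, hyz, ← mul_assoc u z y]
        _ = (-(c1 * cb)) • (x ^ n * z ^ (b + 1))
              + (y ^ b * x ^ (n + b + 1) - c1 • (u * z)) * y := by
            rw [smul_add, smul_smul, sub_mul, smul_mul_assoc]
            module
        _ = ((-1 : ℂ) ^ (b + 1) * (((n + (b + 1)).descFactorial (b + 1) : ℕ) : ℂ))
              • (x ^ n * z ^ (b + 1))
              + (y ^ b * x ^ (n + b + 1) - c1 • (u * z)) * y := by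
            rw [hcoef]

/-- Scalar multiplication by a complex number preserves membership in left ideals of `U`. -/
lemma csmul_mem {p : Submodule U U} (c : ℂ) {v : U} (hv : v ∈ p) : c • v ∈ p := by
  rw [← algebraMap_smul U c v]
  exact p.smul_mem _ hv

lemma IkL0_le_Iwt (k k0 k1 k2 : ℕ) : IkL0 k ≤ Iwt k k0 k1 k2 :=
  le_sup_left.trans (le_sup_left.trans le_sup_left)

lemma nplus_le_Iwt (k k0 k1 k2 : ℕ) : nplusIdeal ≤ Iwt k k0 k1 k2 :=
  le_sup_right.trans (IkL0_le_Iwt k k0 k1 k2)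

lemma Jid_le_Iwt (k k0 k1 k2 : ℕ) : Jid k ≤ Iwt k k0 k1 k2 :=
  le_sup_left.trans (IkL0_le_Iwt k k0 k1 k2)

lemma xgen_mem_Iwt (k k0 k1 k2 : ℕ) : xg 0 (-1) ^ (k0 + k2 + 1) ∈ Iwt k k0 k1 k2 := by
  have h : xg 0 (-1) ^ (k0 + k2 + 1) ∈ Submodule.span U {xg 0 (-1) ^ (k0 + k2 + 1)} :=
    Submodule.mem_span_singleton_self _
  exact ((le_sup_right.trans le_sup_left).trans le_sup_left : _ ≤ Iwt k k0 k1 k2) h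

lemma y_mem_nplus : xg 1 0 ∈ nplusIdeal :=
  Submodule.subset_span ⟨1, 0, le_refl 0, rfl⟩

/-- Key step: `x^(k1+1)·z^(k2) ∈ Iwt k k2 k0 k1`. -/
lemma mixed_mem (k k0 k1 k2 : ℕ) :
    xg 0 (-1) ^ (k1 + 1) * xg 2 (-1) ^ k2 ∈ Iwt k k2 k0 k1 := by
  obtain ⟨u, hu⟩ := ypow_xpow (k1 + 1) k2
  have hgen : xg 0 (-1) ^ (k1 + 1 + k2) ∈ Iwt k k2 k0 k1 := by
    have := xgen_mem_Iwt k k2 k0 k1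
    rwa [show k2 + k1 + 1 = k1 + 1 + k2 by omega] at this
  have h1 : xg 1 0 ^ k2 * xg 0 (-1) ^ (k1 + 1 + k2) ∈ Iwt k k2 k0 k1 :=
    Submodule.smul_mem _ _ hgen
  have h2 : u * xg 1 0 ∈ Iwt k k2 k0 k1 :=
    nplus_le_Iwt k k2 k0 k1 (Submodule.smul_mem _ u y_mem_nplus)
  have h3 : ((-1 : ℂ) ^ k2 * (((k1 + 1 + k2).descFactorial k2 : ℕ) : ℂ))
      • (xg 0 (-1) ^ (k1 + 1) * xg 2 (-1) ^ k2) ∈ Iwt k k2 k0 k1 := by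
    have := Submodule.sub_mem _ h1 h2
    rwa [hu, add_sub_cancel_right] at this
  have hc : ((-1 : ℂ) ^ k2 * (((k1 + 1 + k2).descFactorial k2 : ℕ) : ℂ)) ≠ 0 := by
    apply mul_ne_zero
    · exact pow_ne_zero _ (by norm_num)
    · rw [Nat.cast_ne_zero]
      intro h0
      have := Nat.descFactorial_eq_zero_iff_lt.mp h0
      omega
  have := csmul_mem (((-1 : ℂ) ^ k2 * (((k1 + 1 + k2).descFactorial k2 : ℕ) : ℂ)))⁻¹ h3
  rwa [smul_smul, inv_mul_cancel₀ hc, one_smul] at this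

/-! ### The commutative subalgebra generated by the `x_{α₁}(m)` and `x_{α₁+α₂}(−1)` -/

def genSet : Set U := Set.range (xg 0) ∪ {xg 2 (-1)}

lemma genSet_comm : ∀ a ∈ genSet, ∀ b ∈ genSet, a * b = b * a := by
  rintro a (⟨m, rfl⟩ | rfl) b (⟨p, rfl⟩ | rfl)
  · exact (comm00 m p).eq
  · exact (comm02 m (-1)).eq
  · exact (comm20 (-1) p).eq
  · exact (comm22 (-1) (-1)).eq

instance : CommRing (Algebra.adjoin ℂ genSet) :=
  Algebra.adjoinCommRingOfComm ℂ genSet_comm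

/-- The generator `x_{α₁}(m)` inside the commutative subalgebra. -/
def g (m : ℤ) : Algebra.adjoin ℂ genSet :=
  ⟨xg 0 m, Algebra.subset_adjoin (Or.inl ⟨m, rfl⟩)⟩

/-- The generator `x_{α₁+α₂}(−1)` inside the commutative subalgebra. -/
def gz : Algebra.adjoin ℂ genSet :=
  ⟨xg 2 (-1), Algebra.subset_adjoin (Or.inr rfl)⟩

@[simp] lemma coe_g (m : ℤ) : ((g m : Algebra.adjoin ℂ genSet) : U) = xg 0 m := rfl

@[simp] lemma coe_gz : ((gz : Algebra.adjoin ℂ genSet) : U) = xg 2 (-1) := rfl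

@[simp] lemma coe_natCastW (n : ℕ) :
    (((n : ℕ) : Algebra.adjoin ℂ genSet) : U) = (n : U) :=
  map_natCast (Algebra.adjoin ℂ genSet).val n

lemma listProd_eq (n : ℕ) (h : Fin n → ℤ) :
    (List.ofFn fun j => xg 0 (h j)).prod = ((∏ j, g (h j) : Algebra.adjoin ℂ genSet) : U) := by
  have h1 : (∏ j, g (h j) : Algebra.adjoin ℂ genSet)
      = (List.ofFn fun j => g (h j)).prod := (List.prod_ofFn).symm
  rw [h1]
  rw [show ((List.ofFn fun j => g (h j)).prod : U)
      = (Algebra.adjoin ℂ genSet).val ((List.ofFn fun j => g (h j)).prod) from rfl]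
  rw [map_list_prod]
  rw [List.map_ofFn]
  rfl

/-- Split the product over zero and nonzero entries. -/
lemma prod_split (n : ℕ) (f : Fin n → ℕ) :
    (∏ j, g (-1 - (f j : ℤ)))
      = g (-1) ^ (Finset.univ.filter (fun j => f j = 0)).card
        * ∏ j ∈ Finset.univ.filter (fun j => ¬ f j = 0), g (-1 - (f j : ℤ)) := by
  rw [← Finset.prod_filter_mul_prod_filter_not Finset.univ (fun j => f j = 0)]
  congr 1
  rw [Finset.prod_congr rfl (fun j hj => ?_), Finset.prod_const]
  have := (Finset.mem_filter.mp hj).2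
  rw [this]
  norm_num

lemma card_nonzero_le (n a : ℕ) (f : Fin n → ℕ) (hf : ∑ j, f j = a) :
    (Finset.univ.filter (fun j => ¬ f j = 0)).card ≤ a := by
  have h : (Finset.univ.filter (fun j => ¬ f j = 0)).card • 1
      ≤ ∑ j ∈ Finset.univ.filter (fun j => ¬ f j = 0), f j := by
    apply Finset.card_nsmul_le_sum
    intro x hx
    have := (Finset.mem_filter.mp hx).2
    omega
  rw [smul_eq_mul, mul_one] at h
  calc (Finset.univ.filter (fun j => ¬ f j = 0)).card
      ≤ ∑ j ∈ Finset.univ.filter (fun j => ¬ f j = 0), f j := h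
    _ = ∑ j, f j := Finset.sum_filter_ne_zero _
    _ = a := hf

lemma card_nonzero_lt (n a : ℕ) (f : Fin n → ℕ) (hf : ∑ j, f j = a)
    (j0 : Fin n) (hj0 : 2 ≤ f j0) :
    (Finset.univ.filter (fun j => ¬ f j = 0)).card + 1 ≤ a := by
  set s := Finset.univ.filter (fun j => ¬ f j = 0) with hs
  have hj0s : j0 ∈ s := Finset.mem_filter.mpr ⟨Finset.mem_univ _, by omega⟩
  have h1 : f j0 + ∑ j ∈ s.erase j0, f j = ∑ j ∈ s, f j := Finset.add_sum_erase s f hj0s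
  have h2 : (s.erase j0).card • 1 ≤ ∑ j ∈ s.erase j0, f j := by
    apply Finset.card_nsmul_le_sum
    intro x hx
    have := (Finset.mem_filter.mp (Finset.mem_of_mem_erase hx)).2
    omega
  rw [smul_eq_mul, mul_one] at h2
  have h3 : (s.erase j0).card = s.card - 1 := Finset.card_erase_of_mem hj0s
  have h4 : 1 ≤ s.card := Finset.card_pos.mpr ⟨j0, hj0s⟩
  have h5 : ∑ j ∈ s, f j = a := by rw [hs, Finset.sum_filter_ne_zero, hf]
  omega


lemma prod_good (n aa : ℕ) (f : Fin n → ℕ) (hf : ∑ j, f j = aa) (hle : ∀ j, f j ≤ 1) :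
    (∏ j, g (-1 - (f j : ℤ))) = g (-1) ^ (n - aa) * g (-2) ^ aa := by
  classical
  have hcnz : (Finset.univ.filter (fun j => ¬ f j = 0)).card = aa := by
    have h1 : ∑ j ∈ Finset.univ.filter (fun j => ¬ f j = 0), f j = aa := by
      rw [Finset.sum_filter_ne_zero]; exact hf
    have h2 : ∑ j ∈ Finset.univ.filter (fun j => ¬ f j = 0), f j
        = (Finset.univ.filter (fun j => ¬ f j = 0)).card := by
      rw [Finset.sum_congr rfl (fun j hj => show f j = 1 by
        have := (Finset.mem_filter.mp hj).2; have := hle j; omega)]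
      rw [Finset.sum_const, smul_eq_mul, mul_one]
    omega
  have hc0 : (Finset.univ.filter (fun j => f j = 0)).card = n - aa := by
    have := Finset.card_filter_add_card_filter_not
      (s := (Finset.univ : Finset (Fin n))) (p := fun j => f j = 0)
    rw [Finset.card_univ, Fintype.card_fin] at this
    omega
  rw [prod_split, hc0]
  congr 1
  rw [Finset.prod_congr rfl (fun j hj => show g (-1 - (f j : ℤ)) = g (-2) by
      have h1 := (Finset.mem_filter.mp hj).2
      have h2 := hle j
      have : f j = 1 := by omega
      rw [this]; norm_num)]
  rw [Finset.prod_const, hcnz]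

lemma good_exists (n aa : ℕ) (h : aa ≤ n) :
    ∃ f : Fin n → ℕ, (∑ j, f j = aa) ∧ ∀ j, f j ≤ 1 := by
  have hak : aa + (n - aa) = n := by omega
  refine ⟨fun j => Fin.append (fun _ : Fin aa => 1) (fun _ : Fin (n - aa) => 0)
    (Fin.cast hak.symm j), ?_, ?_⟩
  · have h1 : ∑ j : Fin n, Fin.append (fun _ : Fin aa => 1) (fun _ : Fin (n - aa) => 0)
        (Fin.cast hak.symm j)
        = ∑ j : Fin (aa + (n - aa)), Fin.append (fun _ : Fin aa => 1)
            (fun _ : Fin (n - aa) => 0) j :=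
      Fintype.sum_equiv (finCongr hak.symm) _ _ (fun j => rfl)
    rw [h1, Fin.sum_univ_add]
    simp
  · intro j
    show Fin.append (fun _ : Fin aa => 1) (fun _ : Fin (n - aa) => 0) (Fin.cast hak.symm j) ≤ 1
    generalize Fin.cast hak.symm j = i
    refine Fin.addCases (fun i => ?_) (fun i => ?_) i
    · rw [Fin.append_left]
    · rw [Fin.append_right]
      omega



set_option maxHeartbeats 4000000 in
set_option synthInstance.maxHeartbeats 1000000 in
/-- x_{α₁}(−2)^(k₀+k₂+1)·x_{α₁}(−1)^k₁·x_{α₁+α₂}(−1)^k₂ ∈ I_{k₂Λ₀+k₀Λ₁+k₁Λ₂}. -/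
theorem statement13 (k : ℕ) (hk : 0 < k) (k0 k1 k2 : ℕ) (hsum : k0 + k1 + k2 = k) :
    xg 0 (-2) ^ (k0 + k2 + 1) * xg 0 (-1) ^ k1 * xg 2 (-1) ^ k2 ∈ Iwt k k2 k0 k1 := by
  classical
  set a : ℕ := k0 + k2 + 1 with ha
  set t : ℤ := (k : ℤ) + (k0 : ℤ) + (k2 : ℤ) + 2 with ht
  have hts : ((k : ℕ) : ℤ) + 1 ≤ t := by omega
  have htoNat : (t - ((k : ℕ) + 1)).toNat = a := by omega
  set S : Finset (Fin (k + 1) → ℕ) := Finset.Nat.antidiagonalTuple (k + 1) a with hS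
  set P : (Fin (k + 1) → ℕ) → Algebra.adjoin ℂ genSet := fun f => ∏ j, g (-1 - (f j : ℤ)) with hP
  -- Rtr as a coercion from the commutative subalgebra
  have hRtr : Rtr k 0 t = ((∑ f ∈ S, P f : Algebra.adjoin ℂ genSet) : U) := by
    rw [Rtr, htoNat]
    rw [show ((∑ f ∈ S, P f : Algebra.adjoin ℂ genSet) : U) = ∑ f ∈ S, ((P f : Algebra.adjoin ℂ genSet) : U) from map_sum (Algebra.adjoin ℂ genSet).val _ _]
    exact Finset.sum_congr rfl fun f _ => listProd_eq (k + 1) _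
  -- split into good and bad tuples
  set good : Finset (Fin (k + 1) → ℕ) := S.filter (fun f => ∀ j, f j ≤ 1) with hgood
  set bad : Finset (Fin (k + 1) → ℕ) := S.filter (fun f => ¬ ∀ j, f j ≤ 1) with hbad
  have hsplit : ∑ f ∈ S, P f = ∑ f ∈ good, P f + ∑ f ∈ bad, P f :=
    (Finset.sum_filter_add_sum_filter_not S _ P).symm
  set N : ℕ := good.card with hN
  have hMval : ∀ f ∈ good, P f = g (-1) ^ k1 * g (-2) ^ a := by
    intro f hf
    rw [Finset.mem_filter] at hf
    have hfs : ∑ j, f j = a := Finset.Nat.mem_antidiagonalTuple.mp hf.1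
    have := prod_good (k + 1) a f hfs hf.2
    rwa [show k + 1 - a = k1 by omega] at this
  have hgsum : ∑ f ∈ good, P f = N • (g (-1) ^ k1 * g (-2) ^ a) := by
    rw [Finset.sum_congr rfl hMval, Finset.sum_const]
  -- bad terms are divisible by g(-1)^(k1+1)
  have hbadmem : ∑ f ∈ bad, P f ∈ Ideal.span {g (-1) ^ (k1 + 1)} := by
    refine Ideal.sum_mem _ fun f hf => ?_
    rw [Finset.mem_filter] at hf
    obtain ⟨hfS, hfb⟩ := hf
    push_neg at hfb
    obtain ⟨j0, hj0⟩ := hfb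
    have hfs : ∑ j, f j = a := Finset.Nat.mem_antidiagonalTuple.mp hfS
    have hlt := card_nonzero_lt (k + 1) a f hfs j0 (by omega)
    have hc0 : k1 + 1 ≤ (Finset.univ.filter (fun j => f j = 0)).card := by
      have := Finset.card_filter_add_card_filter_not
        (s := (Finset.univ : Finset (Fin (k + 1)))) (p := fun j => f j = 0)
      rw [Finset.card_univ, Fintype.card_fin] at this
      omega
    rw [Ideal.mem_span_singleton]
    show g (-1) ^ (k1 + 1) ∣ ∏ j, g (-1 - (f j : ℤ))
    rw [prod_split]
    exact dvd_mul_of_dvd_left (pow_dvd_pow (g (-1)) hc0) _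
  obtain ⟨Q, hQ⟩ := (Ideal.mem_span_singleton).mp hbadmem
  -- the good set is nonempty
  have hNpos : 0 < N := by
    obtain ⟨f0, hf0s, hf0le⟩ := good_exists (k + 1) a (by omega)
    exact Finset.card_pos.mpr ⟨f0, Finset.mem_filter.mpr
      ⟨Finset.Nat.mem_antidiagonalTuple.mpr hf0s, hf0le⟩⟩
  -- identity in the commutative subalgebra
  have hWid : gz ^ k2 * (∑ f ∈ S, P f)
      = (N : Algebra.adjoin ℂ genSet) * (g (-2) ^ a * g (-1) ^ k1 * gz ^ k2)
        + Q * (g (-1) ^ (k1 + 1) * gz ^ k2) := by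
    rw [hsplit, hgsum, hQ, nsmul_eq_mul]
    ring
  -- push to U
  set X : U := xg 0 (-2) ^ a * xg 0 (-1) ^ k1 * xg 2 (-1) ^ k2 with hX
  have hUid : xg 2 (-1) ^ k2 * Rtr k 0 t
      = (N : U) * X + (Q : U) * (xg 0 (-1) ^ (k1 + 1) * xg 2 (-1) ^ k2) := by
    rw [hRtr]
    calc xg 2 (-1) ^ k2 * ((∑ f ∈ S, P f : Algebra.adjoin ℂ genSet) : U)
        = ((gz ^ k2 * ∑ f ∈ S, P f : Algebra.adjoin ℂ genSet) : U) := by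
          push_cast [coe_g, coe_gz]
          ring_nf
      _ = (N : U) * X + (Q : U) * (xg 0 (-1) ^ (k1 + 1) * xg 2 (-1) ^ k2) := by
          rw [hWid, hX]
          push_cast [coe_g, coe_gz]
          ring_nf
  -- membership
  set I := Iwt k k2 k0 k1 with hI
  have hRtrI : Rtr k 0 t ∈ I :=
    Jid_le_Iwt k k2 k0 k1 (Submodule.subset_span ⟨0, t, hts, rfl⟩)
  have h1 : xg 2 (-1) ^ k2 * Rtr k 0 t ∈ I := Submodule.smul_mem _ _ hRtrI
  have h2 : (Q : U) * (xg 0 (-1) ^ (k1 + 1) * xg 2 (-1) ^ k2) ∈ I :=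
    Submodule.smul_mem _ _ (mixed_mem k k0 k1 k2)
  have h3 : (N : U) * X ∈ I := by
    have := Submodule.sub_mem _ h1 h2
    rwa [hUid, add_sub_cancel_right] at this
  have h4 : ((N : ℕ) : ℂ) • X ∈ I := by
    rwa [Algebra.smul_def, map_natCast]
  have h5 := csmul_mem (((N : ℕ) : ℂ))⁻¹ h4
  rwa [smul_smul, inv_mul_cancel₀ (Nat.cast_ne_zero.mpr (by omega)), one_smul] at h5

end PrincipalSubspaceSL3
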